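/- Let C be a monoidal category, x, x̄ objects, and suppose there exist isomorphisms i : 𝟙_C ≅ x ⊗ x̄ and e : x̄ ⊗ x ≅ 𝟙_C. Then there exists an isomorphism i' : 𝟙_C ≅ x ⊗ x̄ such that the quadruple (x, x̄, i'.hom, e.hom) satisfies both zig-zag identities, i.e. forms an adjoint equivalence. Consequently, in any weak 2-group (a monoidal category in which every morphism is invertible and every object has a weak inverse), every object can be equipped with an adjoint equivalence. -/

import Mathlib

open CategoryTheory MonoidalCategory

section
open Bicategory

lemma aux1_stmt5 {B : Type*} [Bicategory B] {a b : B} (E : Bicategory.Equivalence a b) :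
    (Bicategory.leftUnitor E.inv).hom ≫ (Bicategory.rightUnitor E.inv).inv =
      (E.counit.inv ▷ E.inv) ≫ (Bicategory.associator E.inv E.hom E.inv).hom ≫
        (E.inv ◁ E.unit.inv) := by
  have h := congrArg Iso.inv E.right_triangle
  simp only [rightZigzagIso_inv, leftZigzag, bicategoricalComp, Iso.trans_inv, Iso.symm_inv] at h
  simpa using h.symm

lemma aux2_stmt5 {B : Type*} [Bicategory B] {a b : B} (E : Bicategory.Equivalence a b) :
    (Bicategory.rightUnitor E.hom).hom ≫ (Bicategory.leftUnitor E.hom).inv =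
      (E.hom ◁ E.counit.inv) ≫ (Bicategory.associator E.hom E.inv E.hom).inv ≫
        (E.unit.inv ▷ E.hom) := by
  have h := congrArg Iso.inv E.left_triangle
  simp only [leftZigzagIso_inv, rightZigzag, bicategoricalComp, Iso.trans_inv, Iso.symm_inv] at h
  simpa using h.symm

end

/-- Improvement: given isomorphisms `i : 𝟙_C ≅ x ⊗ x̄` and `e : x̄ ⊗ x ≅ 𝟙_C`, there is an
isomorphism `i' : 𝟙_C ≅ x ⊗ x̄` such that `(x, x̄, i'.hom, e.hom)` satisfies both zig-zag
identities, i.e. forms an adjoint equivalence. -/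
theorem stmt5 {C : Type*} [Category C] [MonoidalCategory C]
    (x xbar : C) (i : 𝟙_ C ≅ x ⊗ xbar) (e : xbar ⊗ x ≅ 𝟙_ C) :
    ∃ i' : 𝟙_ C ≅ x ⊗ xbar,
      ((λ_ x).hom ≫ (ρ_ x).inv =
        (i'.hom ▷ x) ≫ (α_ x xbar x).hom ≫ (x ◁ e.hom)) ∧
      ((ρ_ xbar).hom ≫ (λ_ xbar).inv =
        (xbar ◁ i'.hom) ≫ (α_ xbar x xbar).inv ≫ (e.hom ▷ xbar)) := by
  let a : MonoidalSingleObj C := MonoidalSingleObj.star C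
  let f : a ⟶ a := xbar
  let g : a ⟶ a := x
  let η : CategoryStruct.id a ≅ CategoryStruct.comp f g := e.symm
  let ε : CategoryStruct.comp g f ≅ CategoryStruct.id a := i.symm
  let E := Bicategory.Equivalence.mkOfAdjointifyCounit η ε
  exact ⟨E.counit.symm, aux1_stmt5 E, aux2_stmt5 E⟩
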